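/- There exists an AS graph with consistent business relationships and a partial S*BGP deployment in which, if one AS places the secure-route preference above local preference while another places it below local preference, the routing system has two distinct stable states; in particular, after a link failure and recovery, the system can settle into a stable state different from the original one (a BGP Wedgie). -/
import Mathlib


open scoped Classical

namespace SBGP

/-- Business relationship of a neighbor, from the point of view of a given AS. -/
inductive Rel
  | customer
  | peer
  | provider
deriving DecidableEq

/-- The three positions at which the secure-route preference step can be inserted. -/
inductive SecModel
  | first
  | second
  | third
deriving DecidableEq

/-- An AS-level graph with business relationships on its edges. -/
structure ASGraph (V : Type*) where
  adj : V → V → Bool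
  /-- `rel u v` is the relationship of `v` as seen from `u`
      (`customer` means `v` is `u`'s customer, etc.). -/
  rel : V → V → Rel
  adj_symm : ∀ u v, adj u v = adj v u
  adj_irrefl : ∀ v, adj v v = false
  rel_consistent : ∀ u v, adj u v = true →
    ((rel u v = Rel.customer ↔ rel v u = Rel.provider) ∧
     (rel u v = Rel.peer ↔ rel v u = Rel.peer))

variable {V : Type*}

def lpRank : Rel → ℕ
  | Rel.customer => 0
  | Rel.peer => 1
  | Rel.provider => 2

/-- The relationship of the next hop of a route (`none` for trivial routes). -/
def nextRel (G : ASGraph V) : List V → Option Rel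
  | a :: b :: _ => some (G.rel a b)
  | _ => none

/-- Local-preference value of a route (customer < peer < provider). -/
def lpVal (G : ASGraph V) : List V → ℕ
  | a :: b :: _ => lpRank (G.rel a b)
  | _ => 0

/-- `R` is a (nonempty) path in `G`. -/
def IsPath (G : ASGraph V) : List V → Prop
  | [] => False
  | [_] => True
  | a :: b :: rest => G.adj a b = true ∧ IsPath G (b :: rest)

/-- `R` is a simple route in `G` ending at `d`. -/
def IsRouteTo (G : ASGraph V) (R : List V) (d : V) : Prop :=
  R.Nodup ∧ IsPath G R ∧ R.getLast? = some d

/-- The export rule (Ex) along a route `a :: b :: c :: …`: each internal AS `b`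
announces its route (with next hop `c`) to `a` only if that route is a customer
route of `b`, or `a` is `b`'s customer. -/
def ExportOK (G : ASGraph V) : List V → Prop
  | a :: b :: c :: rest =>
      (G.rel b c = Rel.customer ∨ G.rel b a = Rel.customer) ∧
      ExportOK G (b :: c :: rest)
  | _ => True

/-- A route is secure iff every AS on it has deployed S*BGP and it does not
contain the attacker (the bogus route is insecure even if the attacker is in `S`). -/
def SecureRoute (S : Finset V) (m : Option V) (R : List V) : Prop :=
  (∀ v ∈ R, v ∈ S) ∧ (∀ m', m = some m' → m' ∉ R)

/-- A legitimate route: ends at the destination `d` and avoids the attacker. -/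
def LegitRoute (m : Option V) (d : V) (R : List V) : Prop :=
  R.getLast? = some d ∧ ∀ m', m = some m' → m' ∉ R

/-- Perceivable routes at `s` for destination `d` when the (optional) attacker `m`
announces the bogus path "m,d": either a genuine export-compliant route to `d`
avoiding `m`, or an export-compliant route to `m` extended by `m`'s claimed
(possibly nonexistent) edge to `d`. -/
def Perceivable (G : ASGraph V) (m : Option V) (d : V) (s : V) (R : List V) : Prop :=
  R.head? = some s ∧
  ((IsRouteTo G R d ∧ ExportOK G R ∧ ∀ m', m = some m' → m' ∉ R) ∨
   (∃ m' R', m = some m' ∧ R = R' ++ [d] ∧ IsRouteTo G R' m' ∧ d ∉ R' ∧ ExportOK G R'))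

/-- The rank of a route (smaller is better), encoding lexicographically the
ranking steps of the given security model: LP (customer > peer > provider),
SP (shorter > longer) and SecP (secure > insecure), in the order determined by
the model.  All components are `< Fintype.card V + 2`, so the encoding is
faithful on simple routes. -/
noncomputable def rankNat [Fintype V] (G : ASGraph V) (S : Finset V) (m : Option V)
    (mdl : SecModel) (R : List V) : ℕ :=
  let B := Fintype.card V + 2
  let lp := lpVal G R
  let len := R.length
  let sec : ℕ := if SecureRoute S m R then 0 else 1
  match mdl with
  | SecModel.first => sec * B * B + lp * B + len
  | SecModel.second => lp * B * B + sec * B + len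
  | SecModel.third => lp * B * B + len * B + sec

/-- `n` exports the route `R` (its currently selected route) to neighbor `s`:
always if `R` is a customer route of `n` or `n` originates `R`; otherwise only
if `s` is `n`'s customer. -/
def exportsTo (G : ASGraph V) (n s : V) : List V → Prop
  | _ :: c :: _ => G.rel n c = Rel.customer ∨ G.rel n s = Rel.customer
  | _ => True

/-- Routes available to `s` given the current selections `σ` of all ASes:
routes exported by neighbors (with BGP loop detection), together with the
attacker's bogus announcement "m,d" to each of its neighbors. -/
def Avail (G : ASGraph V) (m : Option V) (d : V) (σ : V → List V) (s : V)
    (R : List V) : Prop :=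
  (∃ n, G.adj s n = true ∧ (∀ m', m = some m' → n ≠ m') ∧ σ n ≠ [] ∧
      (σ n).head? = some n ∧ s ∉ σ n ∧ exportsTo G n s (σ n) ∧ R = s :: σ n) ∨
  (∃ m', m = some m' ∧ G.adj s m' = true ∧ s ≠ d ∧ R = [s, m', d])

/-- A stable routing state for destination `d`, secure deployment `S`,
attacker `m`, security model `mdl` and tiebreak `tb`: every AS (other than the
destination and the attacker) selects the best available route, where ties in
rank are broken by the strict tiebreak `tb`. -/
def Stable [Fintype V] (G : ASGraph V) (tb : V → List V → ℕ) (S : Finset V)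
    (m : Option V) (d : V) (mdl : SecModel) (σ : V → List V) : Prop :=
  σ d = [d] ∧
  (∀ m', m = some m' → σ m' = []) ∧
  ∀ s, s ≠ d → (∀ m', m = some m' → s ≠ m') →
    ((σ s = [] ∧ ∀ R, ¬ Avail G m d σ s R) ∨
     (Avail G m d σ s (σ s) ∧
      ∀ R, Avail G m d σ s R → R ≠ σ s →
        rankNat G S m mdl (σ s) < rankNat G S m mdl R ∨
        (rankNat G S m mdl (σ s) = rankNat G S m mdl R ∧ tb s (σ s) < tb s R)))

/-- `s` is happy: it selects a legitimate route to `d`, avoiding the attacker. -/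
def Happy (m : Option V) (d : V) (σ : V → List V) (s : V) : Prop :=
  σ s ≠ [] ∧ (σ s).getLast? = some d ∧ ∀ m', m = some m' → m' ∉ σ s

/-- The set of most-preferred perceivable routes of `s` (before the tiebreak step). -/
def BPR [Fintype V] (G : ASGraph V) (S : Finset V) (m : Option V) (d : V)
    (mdl : SecModel) (s : V) (R : List V) : Prop :=
  Perceivable G m d s R ∧
  ∀ R', Perceivable G m d s R' → rankNat G S m mdl R ≤ rankNat G S m mdl R'

/-- The number of happy source ASes (sources other than `m` and `d`). -/
noncomputable def happyCount [Fintype V] [DecidableEq V] (m d : V)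
    (σ : V → List V) : ℕ :=
  (Finset.univ.filter fun s => s ≠ m ∧ s ≠ d ∧ Happy (some m) d σ s).card

/-- The customer-provider hierarchy is acyclic. -/
def Hierarchy (G : ASGraph V) : Prop :=
  ∃ h : V → ℕ, ∀ u v, G.adj u v = true → G.rel u v = Rel.customer → h v < h u

/-- The tiebreak of every AS is deterministic (injective on routes). -/
def InjTB (tb : V → List V → ℕ) : Prop :=
  ∀ s, Function.Injective (tb s)

end SBGP
namespace SBGP

/-- Stable routing state when ASes may place the secure-route preference step
at different (per-AS) positions in their route selection. -/
def StableH {V : Type*} [Fintype V] (G : ASGraph V) (tb : V → List V → ℕ)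
    (S : Finset V) (m : Option V) (d : V) (mdl : V → SecModel)
    (σ : V → List V) : Prop :=
  σ d = [d] ∧
  (∀ m', m = some m' → σ m' = []) ∧
  ∀ s, s ≠ d → (∀ m', m = some m' → s ≠ m') →
    ((σ s = [] ∧ ∀ R, ¬ Avail G m d σ s R) ∨
     (Avail G m d σ s (σ s) ∧
      ∀ R, Avail G m d σ s R → R ≠ σ s →
        rankNat G S m (mdl s) (σ s) < rankNat G S m (mdl s) R ∨
        (rankNat G S m (mdl s) (σ s) = rankNat G S m (mdl s) R ∧
          tb s (σ s) < tb s R)))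

/-! ### A concrete 4-AS wedgie example
Nodes: `0 = d` (destination), `1 = a`, `2 = b`, `3 = c`.
Edges: `0–1` (peer–peer), `1–2` (`2` is `1`'s customer), `2–3` (`3` is `2`'s
customer) and `3–0` (`0` is `3`'s customer).  Deployment `S = {0,1,2}` (AS `3`
is insecure).  AS `2` ranks security first, everyone else second. -/

def adjW : Fin 4 → Fin 4 → Bool := fun u v =>
  match u.val, v.val with
  | 0, 1 => true | 1, 0 => true
  | 1, 2 => true | 2, 1 => true
  | 2, 3 => true | 3, 2 => true
  | 3, 0 => true | 0, 3 => true
  | _, _ => false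

def relW : Fin 4 → Fin 4 → Rel := fun u v =>
  match u.val, v.val with
  | 1, 2 => Rel.customer | 2, 1 => Rel.provider
  | 2, 3 => Rel.customer | 3, 2 => Rel.provider
  | 3, 0 => Rel.customer | 0, 3 => Rel.provider
  | _, _ => Rel.peer

def GW : ASGraph (Fin 4) where
  adj := adjW
  rel := relW
  adj_symm := by decide
  adj_irrefl := by decide
  rel_consistent := by decide

def SW : Finset (Fin 4) := {0, 1, 2}

def σW₁ : Fin 4 → List (Fin 4) := ![[0], [1, 2, 3, 0], [2, 3, 0], [3, 0]]

def σW₂ : Fin 4 → List (Fin 4) := ![[0], [1, 0], [2, 1, 0], [3, 0]]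

lemma secure_of (R : List (Fin 4)) (h : ∀ v ∈ R, v ∈ SW) :
    SecureRoute SW none R :=
  ⟨h, fun _ hm' => nomatch hm'⟩

lemma insecure_of (R : List (Fin 4)) (h3 : (3 : Fin 4) ∈ R) :
    ¬ SecureRoute SW none R := fun h => by
  have := h.1 3 h3
  simp [SW] at this

lemma rank_eval_sec (mdl : SecModel) (R : List (Fin 4))
    (h : SecureRoute SW none R) :
    rankNat GW SW none mdl R =
      match mdl with
      | SecModel.first => lpVal GW R * 6 + R.length
      | SecModel.second => lpVal GW R * 36 + R.length
      | SecModel.third => lpVal GW R * 36 + R.length * 6 := by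
  cases mdl <;>
    simp only [rankNat, if_pos h, Fintype.card_fin] <;> ring

lemma rank_eval_insec (mdl : SecModel) (R : List (Fin 4))
    (h : ¬ SecureRoute SW none R) :
    rankNat GW SW none mdl R =
      match mdl with
      | SecModel.first => 36 + lpVal GW R * 6 + R.length
      | SecModel.second => lpVal GW R * 36 + 6 + R.length
      | SecModel.third => lpVal GW R * 36 + R.length * 6 + 1 := by
  cases mdl <;>
    simp only [rankNat, if_neg h, Fintype.card_fin] <;> ring

instance instDecExportsTo {V : Type*} (G : ASGraph V) (n s : V) :
    ∀ R, Decidable (exportsTo G n s R)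
  | [] => .isTrue trivial
  | [_] => .isTrue trivial
  | _ :: _ :: _ => inferInstanceAs (Decidable (_ ∨ _))

instance instDecAvail {V : Type*} [Fintype V] [DecidableEq V] (G : ASGraph V)
    (m : Option V) (d : V) (σ : V → List V) (s : V) (R : List V) :
    Decidable (Avail G m d σ s R) := by
  unfold Avail; infer_instance

def mdlW : Fin 4 → SecModel := fun s => if s = 2 then SecModel.first else SecModel.second

/-- **Inconsistent security placement can create BGP Wedgies.**  There is an AS
graph with consistent business relationships (an acyclic customer-provider
hierarchy), a partial S*BGP deployment `S` and a destination `d` such that if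
one AS places the secure-route preference above local preference while another
places it below local preference, the routing system has two distinct stable
states — so after a link failure and recovery the system can settle into a
stable state different from the original one. -/
theorem wedgie_exists :
    ∃ (n : ℕ) (G : ASGraph (Fin n)) (tb : Fin n → List (Fin n) → ℕ)
      (S : Finset (Fin n)) (d a b : Fin n) (mdl : Fin n → SecModel),
      Hierarchy G ∧ InjTB tb ∧
      mdl b = SecModel.first ∧
      (mdl a = SecModel.second ∨ mdl a = SecModel.third) ∧
      ∃ σ₁ σ₂ : Fin n → List (Fin n),
        StableH G tb S none d mdl σ₁ ∧ StableH G tb S none d mdl σ₂ ∧ σ₁ ≠ σ₂ := by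
  refine ⟨4, GW, fun _ => Encodable.encode, SW, 0, 1, 2, mdlW,
    ⟨![0, 3, 2, 1], by decide⟩, fun s => Encodable.encode_injective,
    by decide, Or.inl (by decide), σW₁, σW₂, ?_, ?_, ?_⟩
  · -- σW₁ is stable
    refine ⟨by decide, by rintro m' ⟨⟩, ?_⟩
    intro s hs _
    fin_cases s
    · exact absurd rfl hs
    · -- s = 1
      right
      refine ⟨by decide, ?_⟩
      intro R hR hne
      unfold Avail at hR
      rcases hR with ⟨n, hadj, -, -, -, hmem, hex, rfl⟩ | ⟨m', hm', -⟩
      · fin_cases n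
        · -- via 0 : route [1,0]
          left
          show rankNat GW SW none (mdlW 1) (σW₁ 1) <
            rankNat GW SW none (mdlW 1) (1 :: σW₁ 0)
          rw [show σW₁ (0 : Fin 4) = [0] from by decide,
            show mdlW 1 = SecModel.second from by decide,
            show σW₁ (1 : Fin 4) = [1, 2, 3, 0] from by decide,
            rank_eval_insec _ _ (insecure_of _ (by decide)),
            rank_eval_sec _ _ (secure_of _ (by decide))]
          decide
        · exact absurd hadj (by decide)
        · exact absurd (by decide : (1 : Fin 4) :: σW₁ 2 = σW₁ 1) hne
        · exact absurd hadj (by decide)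
      · exact nomatch hm'
    · -- s = 2
      right
      refine ⟨by decide, ?_⟩
      intro R hR hne
      unfold Avail at hR
      rcases hR with ⟨n, hadj, -, -, -, hmem, hex, rfl⟩ | ⟨m', hm', -⟩
      · fin_cases n
        · exact absurd hadj (by decide)
        · exact absurd (by decide : (2 : Fin 4) ∈ σW₁ 1) hmem
        · exact absurd hadj (by decide)
        · exact absurd (by decide : (2 : Fin 4) :: σW₁ 3 = σW₁ 2) hne
      · exact nomatch hm'
    · -- s = 3
      right
      refine ⟨by decide, ?_⟩
      intro R hR hne
      unfold Avail at hR
      rcases hR with ⟨n, hadj, -, -, -, hmem, hex, rfl⟩ | ⟨m', hm', -⟩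
      · fin_cases n
        · exact absurd (by decide : (3 : Fin 4) :: σW₁ 0 = σW₁ 3) hne
        · exact absurd hadj (by decide)
        · exact absurd (by decide : (3 : Fin 4) ∈ σW₁ 2) hmem
        · exact absurd hadj (by decide)
      · exact nomatch hm'
  · -- σW₂ is stable
    refine ⟨by decide, by rintro m' ⟨⟩, ?_⟩
    intro s hs _
    fin_cases s
    · exact absurd rfl hs
    · -- s = 1
      right
      refine ⟨by decide, ?_⟩
      intro R hR hne
      unfold Avail at hR
      rcases hR with ⟨n, hadj, -, -, -, hmem, hex, rfl⟩ | ⟨m', hm', -⟩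
      · fin_cases n
        · exact absurd (by decide : (1 : Fin 4) :: σW₂ 0 = σW₂ 1) hne
        · exact absurd hadj (by decide)
        · exact absurd (by decide : (1 : Fin 4) ∈ σW₂ 2) hmem
        · exact absurd hadj (by decide)
      · exact nomatch hm'
    · -- s = 2
      right
      refine ⟨by decide, ?_⟩
      intro R hR hne
      unfold Avail at hR
      rcases hR with ⟨n, hadj, -, -, -, hmem, hex, rfl⟩ | ⟨m', hm', -⟩
      · fin_cases n
        · exact absurd hadj (by decide)
        · exact absurd (by decide : (2 : Fin 4) :: σW₂ 1 = σW₂ 2) hne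
        · exact absurd hadj (by decide)
        · -- via 3 : route [2,3,0]
          left
          show rankNat GW SW none (mdlW 2) (σW₂ 2) <
            rankNat GW SW none (mdlW 2) (2 :: σW₂ 3)
          rw [show σW₂ (3 : Fin 4) = [3, 0] from by decide,
            show mdlW 2 = SecModel.first from by decide,
            show σW₂ (2 : Fin 4) = [2, 1, 0] from by decide,
            rank_eval_sec _ _ (secure_of _ (by decide)),
            rank_eval_insec _ _ (insecure_of _ (by decide))]
          decide
      · exact nomatch hm'
    · -- s = 3
      right
      refine ⟨by decide, ?_⟩
      intro R hR hne
      unfold Avail at hR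
      rcases hR with ⟨n, hadj, -, -, -, hmem, hex, rfl⟩ | ⟨m', hm', -⟩
      · fin_cases n
        · exact absurd (by decide : (3 : Fin 4) :: σW₂ 0 = σW₂ 3) hne
        · exact absurd hadj (by decide)
        · -- via 2 : route [3,2,1,0]
          left
          show rankNat GW SW none (mdlW 3) (σW₂ 3) <
            rankNat GW SW none (mdlW 3) (3 :: σW₂ 2)
          rw [show σW₂ (2 : Fin 4) = [2, 1, 0] from by decide,
            show mdlW 3 = SecModel.second from by decide,
            show σW₂ (3 : Fin 4) = [3, 0] from by decide,
            rank_eval_insec _ _ (insecure_of _ (by decide)),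
            rank_eval_insec _ _ (insecure_of _ (by decide))]
          decide
        · exact absurd hadj (by decide)
      · exact nomatch hm'
  · intro h
    exact absurd (congrFun h 1) (by decide)

end SBGP
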